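/- For every Hermitian positive semidefinite matrix ρ ∈ ℂ^{m×m}, every s ∈ [0,T] and every t ≥ 0, one has Tr(e^{tA(s)} ρ e^{tA(s)†}) ≤ Tr(ρ). -/

import Mathlib

open Matrix Set
open scoped ComplexOrder

attribute [local instance] Matrix.normedAddCommGroup Matrix.normedSpace

/-- Trace norm: `‖X‖₁ = Tr √(XᴴX)`. -/
noncomputable def traceNorm {m : ℕ} (X : Matrix (Fin m) (Fin m) ℂ) : ℝ :=
  (((Matrix.posSemidef_conjTranspose_mul_self X).1.eigenvectorUnitary.1 *
      diagonal (((↑) : ℝ → ℂ) ∘ Real.sqrt ∘ (Matrix.posSemidef_conjTranspose_mul_self X).1.eigenvalues) *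
      (star (Matrix.posSemidef_conjTranspose_mul_self X).1.eigenvectorUnitary : Matrix (Fin m) (Fin m) ℂ)).trace).re

/-- `A(t) = -i H(t) - (1/2) ∑ₖ γₖ(t) Lₖᴴ Lₖ`. -/
noncomputable def Aop {m K : ℕ} (H : ℝ → Matrix (Fin m) (Fin m) ℂ)
    (L : Fin K → Matrix (Fin m) (Fin m) ℂ) (γ : Fin K → ℝ → ℝ) (t : ℝ) : Matrix (Fin m) (Fin m) ℂ :=
  (-Complex.I) • H t - (1 / 2 : ℂ) • ∑ k, (γ k t : ℂ) • ((L k)ᴴ * L k)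

section helpers

variable {n : ℕ}

lemma trace_re_nonneg_of_posSemidef {M : Matrix (Fin n) (Fin n) ℂ} (hM : M.PosSemidef) :
    0 ≤ M.trace.re := by
  have : M.trace = ∑ i, M i i := rfl
  rw [this, Complex.re_sum]
  refine Finset.sum_nonneg fun i _ => ?_
  have := hM.re_dotProduct_nonneg (Pi.single i 1)
  simpa [dotProduct, mulVec, Pi.single_apply, Finset.sum_ite_eq, RCLike.re] using this

open scoped MatrixOrder in
lemma trace_mul_re_nonneg {M N : Matrix (Fin n) (Fin n) ℂ}
    (hM : M.PosSemidef) (hN : N.PosSemidef) : 0 ≤ ((M * N).trace).re := by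
  have h1 : M * N = CFC.sqrt M * (CFC.sqrt M * N) := by
    rw [← Matrix.mul_assoc, CFC.sqrt_mul_sqrt_self M hM.nonneg]
  have h2 : ((CFC.sqrt M * N) * CFC.sqrt M).PosSemidef := by
    have := hN.mul_mul_conjTranspose_same (CFC.sqrt M)
    rwa [(CFC.sqrt_nonneg M).posSemidef.isHermitian.eq] at this
  calc (0:ℝ) ≤ (((CFC.sqrt M * N) * CFC.sqrt M).trace).re := trace_re_nonneg_of_posSemidef h2
  _ = ((M * N).trace).re := by rw [Matrix.trace_mul_comm (CFC.sqrt M * N) (CFC.sqrt M), ← h1]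

lemma posSemidef_real_smul {n : ℕ} {c : ℝ} (hc : 0 ≤ c) {M : Matrix (Fin n) (Fin n) ℂ}
    (hM : M.PosSemidef) : ((c : ℂ) • M).PosSemidef := by
  constructor
  · show ((c : ℂ) • M)ᴴ = _
    rw [Matrix.conjTranspose_smul, hM.1.eq]
    simp [Complex.star_def, Complex.conj_ofReal]
  · intro x
    have hc' : (0 : ℂ) ≤ (c : ℂ) := by
      rw [Complex.le_def]
      simp [hc]
    exact (hM.smul hc').2 x

lemma posSemidef_sum {n : ℕ} {ι : Type*} (s : Finset ι) (f : ι → Matrix (Fin n) (Fin n) ℂ)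
    (h : ∀ i ∈ s, (f i).PosSemidef) : (∑ i ∈ s, f i).PosSemidef := by
  classical
  induction s using Finset.induction with
  | empty => simpa using Matrix.PosSemidef.zero
  | insert _ _ hx ih =>
    rw [Finset.sum_insert hx]
    exact (h _ (Finset.mem_insert_self _ _)).add (ih fun i hi => h i (Finset.mem_insert_of_mem hi))

lemma key {n : ℕ} (B : Matrix (Fin n) (Fin n) ℂ)
    (hC : Matrix.PosSemidef (-(B + Bᴴ)))
    (ρ : Matrix (Fin n) (Fin n) ℂ) (hρ : ρ.PosSemidef)
    (t : ℝ) (ht : 0 ≤ t) :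
    ((NormedSpace.exp (t • B) * ρ * NormedSpace.exp (t • Bᴴ)).trace).re ≤
      (ρ.trace).re := by
  letI : NormedAddCommGroup (Matrix (Fin n) (Fin n) ℂ) := Matrix.linftyOpNormedAddCommGroup
  letI : NormedSpace ℝ (Matrix (Fin n) (Fin n) ℂ) := Matrix.linftyOpNormedSpace
  letI : SeminormedRing (Matrix (Fin n) (Fin n) ℂ) := Matrix.linftyOpSemiNormedRing
  letI : NormedRing (Matrix (Fin n) (Fin n) ℂ) := Matrix.linftyOpNormedRing
  letI : NormedAlgebra ℝ (Matrix (Fin n) (Fin n) ℂ) := Matrix.linftyOpNormedAlgebra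
  have hexp : (NormedSpace.exp : Matrix (Fin n) (Fin n) ℂ → _) = NormedSpace.exp :=
    rfl
  rw [← hexp]
  set C : Matrix (Fin n) (Fin n) ℂ := -(B + Bᴴ) with hCdef
  let φ : Matrix (Fin n) (Fin n) ℂ →L[ℝ] ℝ :=
    Complex.reCLM.comp (LinearMap.toContinuousLinearMap
      ((Matrix.traceLinearMap (Fin n) ℝ ℂ)))
  set f : ℝ → ℝ := fun u =>
    ((NormedSpace.exp (u • B) * ρ * NormedSpace.exp (u • Bᴴ)).trace).re with hfdef
  have hFE : ∀ u : ℝ, NormedSpace.exp (u • Bᴴ) = (NormedSpace.exp (u • B))ᴴ := by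
    intro u
    rw [show u • Bᴴ = (u • B)ᴴ by simp, Matrix.exp_conjTranspose]
  have hderiv : ∀ u : ℝ, HasDerivAt f
      (φ (B * NormedSpace.exp (u • B) * ρ * NormedSpace.exp (u • Bᴴ)
        + NormedSpace.exp (u • B) * ρ * (NormedSpace.exp (u • Bᴴ) * Bᴴ))) u := by
    intro u
    have h1 : HasDerivAt (fun v : ℝ => NormedSpace.exp (v • B) * ρ)
        (B * NormedSpace.exp (u • B) * ρ) u :=
      (hasDerivAt_exp_smul_const' B u).mul_const ρ
    have h2 : HasDerivAt (fun v : ℝ => NormedSpace.exp (v • Bᴴ))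
        (NormedSpace.exp (u • Bᴴ) * Bᴴ) u := hasDerivAt_exp_smul_const Bᴴ u
    have hG := h1.mul h2
    have h3 := φ.hasFDerivAt.comp_hasDerivAt u hG
    exact h3
  have hderiv_nonpos : ∀ u : ℝ,
      φ (B * NormedSpace.exp (u • B) * ρ * NormedSpace.exp (u • Bᴴ)
        + NormedSpace.exp (u • B) * ρ * (NormedSpace.exp (u • Bᴴ) * Bᴴ)) ≤ 0 := by
    intro u
    set E := NormedSpace.exp (u • B) with hEdef
    have hσ : (E * ρ * Eᴴ).PosSemidef := hρ.mul_mul_conjTranspose_same E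
    set σ := E * ρ * Eᴴ with hσdef
    have hval : φ (B * NormedSpace.exp (u • B) * ρ * NormedSpace.exp (u • Bᴴ)
        + NormedSpace.exp (u • B) * ρ * (NormedSpace.exp (u • Bᴴ) * Bᴴ))
        = (((B + Bᴴ) * σ).trace).re := by
      rw [hFE u]
      have e1 : B * E * ρ * Eᴴ = B * σ := by simp only [hσdef, Matrix.mul_assoc]
      have e2 : E * ρ * (Eᴴ * Bᴴ) = σ * Bᴴ := by simp only [hσdef, Matrix.mul_assoc]
      show ((B * E * ρ * Eᴴ + E * ρ * (Eᴴ * Bᴴ)).trace).re = _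
      rw [e1, e2, Matrix.trace_add, Complex.add_re, Matrix.trace_mul_comm σ Bᴴ,
        add_mul, Matrix.trace_add, Complex.add_re]
    rw [hval]
    have hCσ : 0 ≤ ((C * σ).trace).re := trace_mul_re_nonneg hC hσ
    have hBC : (B + Bᴴ) * σ = -(C * σ) := by rw [hCdef, neg_mul, neg_neg]
    rw [hBC]
    simpa using hCσ
  have hmono : f t ≤ f 0 := by
    have hcont : ContinuousOn f (Set.Icc 0 t) :=
      fun x _ => ((hderiv x).continuousAt).continuousWithinAt
    have hanti : AntitoneOn f (Set.Icc 0 t) := by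
      apply antitoneOn_of_deriv_nonpos (convex_Icc 0 t) hcont
      · intro x _
        exact ((hderiv x).differentiableAt).differentiableWithinAt
      · intro x _
        rw [(hderiv x).deriv]
        exact hderiv_nonpos x
    exact hanti (Set.left_mem_Icc.mpr ht) (Set.right_mem_Icc.mpr ht) ht
  have hf0 : f 0 = (ρ.trace).re := by
    simp [hfdef, NormedSpace.exp_zero]
  calc ((NormedSpace.exp (t • B) * ρ * NormedSpace.exp (t • Bᴴ)).trace).re = f t := rfl
  _ ≤ f 0 := hmono
  _ = (ρ.trace).re := hf0

end helpers

theorem stmt_5 {m K : ℕ} (hm : 1 ≤ m) (hK : 1 ≤ K)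
    (H : ℝ → Matrix (Fin m) (Fin m) ℂ) (hH : ∀ t, (H t).IsHermitian)
    (L : Fin K → Matrix (Fin m) (Fin m) ℂ)
    (γ : Fin K → ℝ → ℝ) (hγc : ∀ k, Continuous (γ k)) (hγ : ∀ k t, 0 ≤ γ k t)
    (T : ℝ) (hT : 0 < T)
    (ρ : Matrix (Fin m) (Fin m) ℂ) (hρ : ρ.PosSemidef)
    (s : ℝ) (hs : s ∈ Set.Icc (0 : ℝ) T) (t : ℝ) (ht : 0 ≤ t) :
    (Matrix.trace (NormedSpace.exp (t • Aop H L γ s) * ρ *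
      NormedSpace.exp (t • (Aop H L γ s)ᴴ))).re ≤ (Matrix.trace ρ).re := by
  refine key _ ?_ ρ hρ t ht
  have hS : (∑ k, (γ k s : ℂ) • ((L k)ᴴ * L k))ᴴ = ∑ k, (γ k s : ℂ) • ((L k)ᴴ * L k) := by
    rw [Matrix.conjTranspose_sum]
    refine Finset.sum_congr rfl fun k _ => ?_
    rw [Matrix.conjTranspose_smul, Matrix.conjTranspose_mul, Matrix.conjTranspose_conjTranspose]
    simp [Complex.star_def, Complex.conj_ofReal]
  have hA : (Aop H L γ s)ᴴ = Complex.I • H s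
      - (1 / 2 : ℂ) • ∑ k, (γ k s : ℂ) • ((L k)ᴴ * L k) := by
    show ((-Complex.I) • H s - (1 / 2 : ℂ) • ∑ k, (γ k s : ℂ) • ((L k)ᴴ * L k))ᴴ = _
    rw [Matrix.conjTranspose_sub, Matrix.conjTranspose_smul, Matrix.conjTranspose_smul, hS,
      (hH s).eq]
    norm_num [Complex.star_def]
  have hEq : -(Aop H L γ s + (Aop H L γ s)ᴴ) = ∑ k, (γ k s : ℂ) • ((L k)ᴴ * L k) := by
    rw [hA]
    show -(((-Complex.I) • H s - (1 / 2 : ℂ) • ∑ k, (γ k s : ℂ) • ((L k)ᴴ * L k)) + _) = _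
    module
  rw [hEq]
  exact posSemidef_sum _ _ fun k _ =>
    posSemidef_real_smul (hγ k s) (Matrix.posSemidef_conjTranspose_mul_self (L k))
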